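/- arXiv:math/0003239 — 5 statements merged into one kernel-verified Lean document; each statement's English description precedes it below -/
import Mathlib

section
/- For every prime p, the series ∑_{n≥0} n^5·(n+1)! converges in ℤ_p and its sum equals 26. -/
open Filter Topology

private lemma pow_dvd_fac (p k : ℕ) (hp : 0 < p) : p ^ k ∣ (p * k).factorial := by
  induction k with
  | zero => simp
  | succ k ih =>
    have h1 : (p * k).factorial * p.factorial ∣ (p * k + p).factorial :=
      Nat.factorial_mul_factorial_dvd_factorial_add _ _
    have h2 : p ^ k * p ∣ (p * k).factorial * p.factorial :=
      mul_dvd_mul ih (Nat.dvd_factorial hp le_rfl)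
    have : p * (k + 1) = p * k + p := by ring
    rw [this, pow_succ]
    exact h2.trans h1

private lemma fac_norm_tendsto (p : ℕ) [hp : Fact p.Prime] :
    Tendsto (fun n : ℕ => ‖((n.factorial : ℕ) : ℤ_[p])‖) atTop (𝓝 0) := by
  have hp1 : (1 : ℝ) < p := by exact_mod_cast hp.out.one_lt
  have hlim : Tendsto (fun k : ℕ => ((p : ℝ)⁻¹) ^ k) atTop (𝓝 0) :=
    tendsto_pow_atTop_nhds_zero_of_lt_one (by positivity) (inv_lt_one_of_one_lt₀ hp1)
  rw [NormedAddCommGroup.tendsto_nhds_zero]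
  intro ε hε
  obtain ⟨k, hk⟩ := (hlim.eventually (gt_mem_nhds hε)).exists
  filter_upwards [eventually_ge_atTop (p * k)] with n hn
  have hdvd : (p : ℤ) ^ k ∣ (n.factorial : ℤ) := by
    exact_mod_cast (pow_dvd_fac p k hp.out.pos).trans (Nat.factorial_dvd_factorial hn)
  have hnorm : ‖((n.factorial : ℤ) : ℤ_[p])‖ ≤ (p : ℝ) ^ (-(k : ℤ)) :=
    PadicInt.norm_int_le_pow_iff_dvd.mpr hdvd
  have : ((p : ℝ))⁻¹ ^ k = (p : ℝ) ^ (-(k : ℤ)) := by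
    rw [zpow_neg, inv_pow, zpow_natCast]
  rw [norm_norm]
  push_cast at hnorm
  calc ‖((n.factorial : ℕ) : ℤ_[p])‖ ≤ (p : ℝ) ^ (-(k : ℤ)) := by exact_mod_cast hnorm
    _ = ((p : ℝ))⁻¹ ^ k := this.symm
    _ < ε := hk

/-- For every prime `p`, the series `∑ n^5·(n+1)!` converges in `ℤ_[p]` with sum `26`. -/
theorem series_n_pow_five_mul_factorial_eq_26 (p : ℕ) [Fact p.Prime] :
    HasSum (fun n : ℕ => ((n ^ 5 * (n + 1).factorial : ℕ) : ℤ_[p])) 26 := by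
  -- g(n) = n^4 - 5n^3 + 6n^2 + 11n - 26 satisfies g(n+1)(n+2) - g(n) = n^5, g(0) = -26
  set g : ℕ → ℤ_[p] := fun n =>
    (n : ℤ_[p]) ^ 4 + 6 * (n : ℤ_[p]) ^ 2 + 11 * (n : ℤ_[p]) - 5 * (n : ℤ_[p]) ^ 3 - 26 with hg
  set T : ℕ → ℤ_[p] := fun n => g n * ((n + 1).factorial : ℕ) with hT
  have key : ∀ n : ℕ, ((n ^ 5 * (n + 1).factorial : ℕ) : ℤ_[p]) = T (n + 1) - T n := by
    intro n
    have hfac : ((n + 2).factorial : ℕ) = (n + 2) * (n + 1).factorial := rfl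
    simp only [hT, hg]
    rw [show n + 1 + 1 = n + 2 from rfl, hfac]
    push_cast
    ring
  -- partial sums
  have hsum : ∀ N : ℕ, ∑ n ∈ Finset.range N, ((n ^ 5 * (n + 1).factorial : ℕ) : ℤ_[p])
      = T N - T 0 := by
    intro N
    rw [← Finset.sum_range_sub T N]
    exact Finset.sum_congr rfl fun n _ => key n
  have hT0 : T 0 = -26 := by simp [hT, hg]
  -- T N → 0
  have hTlim : Tendsto T atTop (𝓝 0) := by
    rw [tendsto_zero_iff_norm_tendsto_zero]
    have hfac := fac_norm_tendsto p
    have hfac' : Tendsto (fun n : ℕ => ‖(((n + 1).factorial : ℕ) : ℤ_[p])‖) atTop (𝓝 0) :=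
      hfac.comp (tendsto_add_atTop_nat 1)
    refine squeeze_zero (fun n => norm_nonneg _) (fun n => ?_) hfac'
    calc ‖T n‖ = ‖g n‖ * ‖(((n + 1).factorial : ℕ) : ℤ_[p])‖ := norm_mul _ _
      _ ≤ 1 * ‖(((n + 1).factorial : ℕ) : ℤ_[p])‖ :=
        mul_le_mul_of_nonneg_right (PadicInt.norm_le_one _) (norm_nonneg _)
      _ = _ := one_mul _
  -- summability
  have hsummable : Summable (fun n : ℕ => ((n ^ 5 * (n + 1).factorial : ℕ) : ℤ_[p])) := by
    apply NonarchimedeanAddGroup.summable_of_tendsto_cofinite_zero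
    rw [Nat.cofinite_eq_atTop]
    have : Tendsto (fun n : ℕ => T (n + 1) - T n) atTop (𝓝 (0 - 0)) :=
      (hTlim.comp (tendsto_add_atTop_nat 1)).sub hTlim
    rw [sub_zero] at this
    exact this.congr fun n => (key n).symm
  -- identify the sum
  obtain ⟨a, ha⟩ := hsummable
  have h1 : Tendsto (fun N => ∑ n ∈ Finset.range N,
      ((n ^ 5 * (n + 1).factorial : ℕ) : ℤ_[p])) atTop (𝓝 a) := ha.tendsto_sum_nat
  have h2 : Tendsto (fun N => ∑ n ∈ Finset.range N,
      ((n ^ 5 * (n + 1).factorial : ℕ) : ℤ_[p])) atTop (𝓝 26) := by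
    have : Tendsto (fun N => T N - T 0) atTop (𝓝 (0 - T 0)) := hTlim.sub_const _
    rw [zero_sub, hT0, neg_neg] at this
    exact this.congr fun N => by rw [hsum N, hT0]
  rwa [tendsto_nhds_unique h1 h2] at ha
end

section
/- If F = (z-1)G holds for formal power series and f, g are the Borel-associated series (f = ∑ a_n z^n when F = ∑ a_n z^n/n!, similarly g), then f = (z²·(d/dz) + z - 1)·g. -/
/-- If `F = (z-1)G` and `f, g` are the Borel-associated series of `F, G`, then
`f = z²·g' + (z-1)·g`. -/
theorem borel_of_div_by_z_sub_one {K : Type*} [Field K] [CharZero K]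
    (a b : ℕ → K) (F G f g : PowerSeries K)
    (hF : ∀ n, PowerSeries.coeff n F = a n / n.factorial)
    (hG : ∀ n, PowerSeries.coeff n G = b n / n.factorial)
    (hf : ∀ n, PowerSeries.coeff n f = a n)
    (hg : ∀ n, PowerSeries.coeff n g = b n)
    (h : F = (PowerSeries.X - 1) * G) :
    f = PowerSeries.X ^ 2 * PowerSeries.derivative K g + (PowerSeries.X - 1) * g := by
  have key0 : a 0 = - b 0 := by
    have := congrArg (PowerSeries.coeff 0) h
    have h0 := hG 0
    simp [hF] at this h0
    simp [this, h0]
  have key : ∀ n : ℕ, a (n+1) = (n+1) * b n - b (n+1) := by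
    intro n
    have hc := congrArg (PowerSeries.coeff (n+1)) h
    rw [hF, sub_mul, one_mul, map_sub, PowerSeries.coeff_succ_X_mul, hG, hG] at hc
    have h1 : ((n+1).factorial : K) ≠ 0 := Nat.cast_ne_zero.2 (Nat.factorial_ne_zero _)
    have h2 : ((n).factorial : K) ≠ 0 := Nat.cast_ne_zero.2 (Nat.factorial_ne_zero _)
    have hfac : ((n+1).factorial : K) = (n+1) * n.factorial := by
      push_cast [Nat.factorial_succ]; ring
    rw [hfac] at hc
    have hn1 : ((n : K) + 1) ≠ 0 := by
      exact_mod_cast (Nat.cast_ne_zero (R := K)).2 (Nat.succ_ne_zero n)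
    field_simp at hc
    have hz : ((n.factorial : K)^2 * ((n:K)+1)) ≠ 0 :=
      mul_ne_zero (pow_ne_zero _ h2) hn1
    refine mul_right_cancel₀ hz ?_
    linear_combination ((n.factorial : K)^2 * ((n:K)+1)) * hc
  ext n
  rw [hf, map_add, sub_mul, one_mul, map_sub]
  match n with
  | 0 =>
    simp [key0, hg, pow_two, PowerSeries.coeff_zero_eq_constantCoeff, map_mul]
  | 1 =>
    rw [key 0]
    simp [hg, pow_two, mul_assoc, PowerSeries.coeff_succ_X_mul,
      PowerSeries.coeff_zero_eq_constantCoeff, map_mul]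
  | (n+2) =>
    rw [key (n+1), PowerSeries.coeff_succ_X_mul]
    rw [show PowerSeries.X ^ 2 * PowerSeries.derivative K g
        = PowerSeries.X * (PowerSeries.X * PowerSeries.derivative K g) by ring]
    rw [PowerSeries.coeff_succ_X_mul, PowerSeries.coeff_succ_X_mul,
      PowerSeries.coeff_derivative, hg, hg]
    push_cast
    ring
end

section
/- Let q be an element of a field with q ≠ 0 and q not a root of unity, and define δ_q f(z) = (f(qz) - f(z))/((q-1)z) on formal power series. Then for α ≠ 0, ((1/q)·δ_{q^{-1}})^n applied to 1/(z-α) equals (-1)^n n_q! / ((z-α)(z-αq)···(z-αq^n)), where n_q! = ∏_{m=1}^n (1-q^m)/(1-q). -/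
/-- Iterates of the `q`-difference operator `(1/q)·δ_{q⁻¹}` on the simple fraction
`1/(z-α)`: `((1/q)·δ_{q⁻¹})ⁿ (1/(z-α)) = (-1)ⁿ n_q! / ((z-α)(z-αq)⋯(z-αqⁿ))`. -/
theorem q_difference_iterate_simple_fraction {K : Type*} [Field K] [CharZero K]
    (q α : K) (hq0 : q ≠ 0) (hq : ∀ m : ℕ, 1 ≤ m → q ^ m ≠ 1) (hα : α ≠ 0)
    (n : ℕ) (z : K) (hz : z ≠ 0) (hzn : ∀ j ≤ n, z ≠ α * q ^ j) :
    ((fun g : K → K => fun w => q⁻¹ * ((g (q⁻¹ * w) - g w) / ((q⁻¹ - 1) * w)))^[n]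
        (fun w => 1 / (w - α))) z
      = (-1) ^ n * (∏ m ∈ Finset.range n, ((1 - q ^ (m + 1)) / (1 - q))) /
          ∏ j ∈ Finset.range (n + 1), (z - α * q ^ j) := by
  induction n generalizing z with
  | zero => simp
  | succ n ih =>
    have hq1 : q ≠ 1 := by simpa using hq 1 le_rfl
    have hqi : q⁻¹ ≠ 0 := inv_ne_zero hq0
    have hqinv1 : q⁻¹ - 1 ≠ 0 := sub_ne_zero.mpr (by
      intro h; exact hq1 (by rw [← inv_inv q, h, inv_one]))
    have h1q : (1 : K) - q ≠ 0 := sub_ne_zero.mpr (Ne.symm hq1)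
    have hfac : ∀ j ≤ n + 1, z - α * q ^ j ≠ 0 := fun j hj => sub_ne_zero.mpr (hzn j hj)
    set c : K := ∏ m ∈ Finset.range n, ((1 - q ^ (m + 1)) / (1 - q)) with hc
    set P : K := ∏ j ∈ Finset.range (n + 2), (z - α * q ^ j) with hP
    have hA : P = (∏ j ∈ Finset.range (n + 1), (z - α * q ^ j)) * (z - α * q ^ (n + 1)) :=
      Finset.prod_range_succ _ _
    have hS : P = (∏ j ∈ Finset.range (n + 1), (z - α * q ^ (j + 1))) * (z - α * q ^ 0) := by
      rw [hP, Finset.prod_range_succ']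
    have hAne : (∏ j ∈ Finset.range (n + 1), (z - α * q ^ j)) ≠ 0 :=
      Finset.prod_ne_zero_iff.mpr fun j hj =>
        hfac j (by have := Finset.mem_range.mp hj; omega)
    have hSne : (∏ j ∈ Finset.range (n + 1), (z - α * q ^ (j + 1))) ≠ 0 :=
      Finset.prod_ne_zero_iff.mpr fun j hj =>
        hfac (j + 1) (by have := Finset.mem_range.mp hj; omega)
    have hPne : P ≠ 0 := by
      rw [hA]; exact mul_ne_zero hAne (hfac (n + 1) le_rfl)
    -- value of the n-th iterate at z
    have stepB :
        ((fun g : K → K => fun w => q⁻¹ * ((g (q⁻¹ * w) - g w) / ((q⁻¹ - 1) * w)))^[n]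
          (fun w => 1 / (w - α))) z = (-1) ^ n * c * (z - α * q ^ (n + 1)) / P := by
      rw [ih z hz (fun j hj => hzn j (Nat.le_succ_of_le hj)), hA,
        mul_div_mul_right _ _ (hfac (n + 1) le_rfl)]
    -- value of the n-th iterate at q⁻¹ z
    have stepA :
        ((fun g : K → K => fun w => q⁻¹ * ((g (q⁻¹ * w) - g w) / ((q⁻¹ - 1) * w)))^[n]
          (fun w => 1 / (w - α))) (q⁻¹ * z) = (-1) ^ n * c * q ^ (n + 1) * (z - α) / P := by
      have hz' : q⁻¹ * z ≠ 0 := mul_ne_zero hqi hz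
      have hzn' : ∀ j ≤ n, q⁻¹ * z ≠ α * q ^ j := by
        intro j hj h
        apply hzn (j + 1) (Nat.succ_le_succ hj)
        have : z = q * (q⁻¹ * z) := by field_simp
        rw [this, h]; ring
      rw [ih _ hz' hzn']
      have hshift : ∏ j ∈ Finset.range (n + 1), (q⁻¹ * z - α * q ^ j)
          = q⁻¹ ^ (n + 1) * ∏ j ∈ Finset.range (n + 1), (z - α * q ^ (j + 1)) := by
        calc ∏ j ∈ Finset.range (n + 1), (q⁻¹ * z - α * q ^ j)
            = ∏ j ∈ Finset.range (n + 1), (q⁻¹ * (z - α * q ^ (j + 1))) :=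
              Finset.prod_congr rfl (fun j _ => by rw [pow_succ]; field_simp)
          _ = q⁻¹ ^ (n + 1) * ∏ j ∈ Finset.range (n + 1), (z - α * q ^ (j + 1)) := by
              rw [Finset.prod_mul_distrib, Finset.prod_const, Finset.card_range]
      rw [hshift, hS, inv_pow]
      rw [div_eq_div_iff (mul_ne_zero (inv_ne_zero (pow_ne_zero _ hq0)) hSne)
          (mul_ne_zero hSne (hfac 0 (Nat.zero_le _)))]
      have hpow : (q ^ (n + 1))⁻¹ * q ^ (n + 1) = 1 := inv_mul_cancel₀ (pow_ne_zero _ hq0)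
      linear_combination (-((-1) ^ n * c * (z - α)) *
        ∏ j ∈ Finset.range (n + 1), (z - α * q ^ (j + 1))) * hpow
    rw [Function.iterate_succ_apply']
    show q⁻¹ * ((((fun g : K → K => fun w => q⁻¹ * ((g (q⁻¹ * w) - g w) / ((q⁻¹ - 1) * w)))^[n]
          (fun w => 1 / (w - α))) (q⁻¹ * z)
        - ((fun g : K → K => fun w => q⁻¹ * ((g (q⁻¹ * w) - g w) / ((q⁻¹ - 1) * w)))^[n]
          (fun w => 1 / (w - α))) z) / ((q⁻¹ - 1) * z)) = _
    rw [stepA, stepB, Finset.prod_range_succ]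
    rw [← hc]
    field_simp
    ring
end

section
/- Let q ∈ K^* not a root of unity, α, ξ ∈ K^*, and suppose rational functions γ_{-M},…,γ_N ∈ K satisfy 1/(z-α) = ((-1/q)δ_{q^{-1}} - ξ)(∑_{n=-M}^{N} γ_n/(z - α q^n)) in K(z). Then αξ(1-q) = q^m for some integer m ≥ 1. -/
open Polynomial Finset in
/-- If a linear combination of distinct simple fractions vanishes at all but
finitely many points, all coefficients vanish. -/
lemma key_frac {K : Type*} [Field K] [Infinite K] (T : Finset ℤ) (p b : ℤ → K)
    (hp : Set.InjOn p ↑T) (B : Finset K)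
    (h : ∀ z : K, z ∉ B → ∑ n ∈ T, b n / (z - p n) = 0) :
    ∀ n ∈ T, b n = 0 := by
  classical
  set P : Polynomial K := ∑ n ∈ T, C (b n) * ∏ j ∈ T.erase n, (X - C (p j)) with hPdef
  have hPz : ∀ z : K, z ∉ B ∪ T.image p → P.eval z = 0 := by
    intro z hz
    have hz1 : z ∉ B := fun hh => hz (Finset.mem_union_left _ hh)
    have hz2 : ∀ n ∈ T, z - p n ≠ 0 := by
      intro n hn
      refine sub_ne_zero.mpr fun e => hz (Finset.mem_union_right _ ?_)
      exact Finset.mem_image.mpr ⟨n, hn, e.symm⟩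
    have h0 := h z hz1
    have hev : P.eval z = ∑ n ∈ T, b n * ∏ j ∈ T.erase n, (z - p j) := by
      simp [hPdef, eval_finset_sum, eval_prod]
    rw [hev]
    have : ∀ n ∈ T, b n * ∏ j ∈ T.erase n, (z - p j)
        = (b n / (z - p n)) * ∏ j ∈ T, (z - p j) := by
      intro n hn
      rw [← Finset.mul_prod_erase T _ hn, div_mul_eq_mul_div, eq_div_iff (hz2 n hn)]
      ring
    rw [Finset.sum_congr rfl this, ← Finset.sum_mul, h0, zero_mul]
  have hP : P = 0 := by
    apply Polynomial.eq_zero_of_infinite_isRoot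
    have hfin : (((B ∪ T.image p : Finset K) : Set K)).Finite := (B ∪ T.image p).finite_toSet
    refine (hfin.infinite_compl).mono ?_
    intro z hz
    exact hPz z (by simpa using hz)
  intro n hn
  have hev := congrArg (Polynomial.eval (p n)) hP
  rw [hPdef] at hev
  simp only [eval_finset_sum, eval_mul, eval_C, eval_prod, eval_sub, eval_X,
    Polynomial.eval_zero] at hev
  rw [Finset.sum_eq_single n] at hev
  · have hprod : ∏ j ∈ T.erase n, (p n - p j) ≠ 0 := by
      rw [Finset.prod_ne_zero_iff]
      intro j hj
      have hjT := Finset.mem_of_mem_erase hj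
      have hjn := Finset.ne_of_mem_erase hj
      exact sub_ne_zero.mpr fun e => hjn (hp hjT hn e.symm)
    exact (mul_eq_zero.mp hev).resolve_right hprod
  · intro m hm hmn
    have hmem : n ∈ T.erase m := Finset.mem_erase.mpr ⟨fun e => hmn e.symm, hn⟩
    rw [Finset.prod_eq_zero hmem (sub_self (p n)), mul_zero]
  · intro hnm; exact absurd hn hnm

lemma aux_core {K : Type*} [Field K] (q g u β : K) (hq0 : q ≠ 0) (hq1 : q - 1 ≠ 0)
    (hz : u + β ≠ 0) (hu : u ≠ 0) (hβ : β ≠ 0) (hv : u - β * (q - 1) ≠ 0) :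
    (-1/q) * ((g/((u - β*(q-1))/q) - g/u)/(((1-q)/q)*(u+β)))
    = g/((q-1)*β)/(u - β*(q-1)) - g/((q-1)*β)/u := by
  have h1q : (1:K) - q ≠ 0 := fun h => hq1 (by linear_combination -h)
  have e1 : (-1/q) * ((g/((u - β*(q-1))/q) - g/u)/(((1-q)/q)*(u+β)))
      = g/((u - β*(q-1))*u) := by
    field_simp
    ring
  have e2 : g/((q-1)*β)/(u - β*(q-1)) - g/((q-1)*β)/u = g/((u - β*(q-1))*u) := by
    rw [div_div, div_div, div_sub_div _ _ (mul_ne_zero (mul_ne_zero hq1 hβ) hv)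
      (mul_ne_zero (mul_ne_zero hq1 hβ) hu),
      div_eq_div_iff (mul_ne_zero (mul_ne_zero (mul_ne_zero hq1 hβ) hv)
        (mul_ne_zero (mul_ne_zero hq1 hβ) hu)) (mul_ne_zero hv hu)]
    ring
  rw [e1, e2]

lemma term_eq {K : Type*} [Field K] (q α ξ z g : K) (n : ℤ) (hq0 : q ≠ 0) (hq1 : q ≠ 1)
    (hz : z ≠ 0) (h1 : z - α * q ^ n ≠ 0) (h2 : q⁻¹ * z - α * q ^ n ≠ 0) (hβ : α * q ^ n ≠ 0) :
    (-1/q) * ((g/(q⁻¹*z - α*q^n) - g/(z - α*q^n))/((q⁻¹-1)*z)) - ξ*(g/(z - α*q^n))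
    = g/((q-1)*(α*q^n))/(z - α*q^(n+1)) - g/((q-1)*(α*q^n))/(z - α*q^n)
      - ξ*g/(z - α*q^n) := by
  set β := α * q ^ n with hβdef
  set u := z - β with hudef
  have hz' : u + β = z := by rw [hudef]; ring
  have hzz : u + β ≠ 0 := by rw [hz']; exact hz
  have e0 : z - α * q ^ (n+1) = u - β * (q - 1) := by
    rw [zpow_add_one₀ hq0, hudef, hβdef]; ring
  have e1 : q⁻¹ * z - β = (u - β * (q - 1)) / q := by
    rw [hudef]; field_simp; ring
  have e2 : (q⁻¹ - 1) * z = ((1 - q) / q) * (u + β) := by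
    rw [hz']; field_simp
  have hv : u - β * (q - 1) ≠ 0 := by
    intro hcon
    apply h2
    rw [e1, hcon, zero_div]
  rw [e0, e1, e2, aux_core q g u β hq0 (sub_ne_zero.mpr hq1) hzz h1 hβ hv,
    mul_div_assoc']

lemma scalar_eq {K : Type*} [Field K] (q α ξ x y w t : K) (hq0 : q ≠ 0) (hq1 : q - 1 ≠ 0)
    (hα : α ≠ 0) (ht : t ≠ 0)
    (e : x / ((q-1)*(α*(t/q))) - y/((q-1)*(α*t)) - ξ*y - w = 0) :
    q * x = y * (1 - (α*ξ*(1-q))*t) + w*((q-1)*α*t) := by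
  field_simp at e
  linear_combination e

lemma zpow_eq_one_imp {K : Type*} [Field K] (q : K) (hq0 : q ≠ 0)
    (hq : ∀ m : ℕ, 1 ≤ m → q ^ m ≠ 1) : ∀ n : ℤ, q ^ n = 1 → n = 0 := by
  have key : ∀ n : ℤ, 0 < n → q ^ n ≠ 1 := by
    intro n hn he
    have : q ^ n.toNat = (1:K) := by
      rw [← zpow_natCast, Int.toNat_of_nonneg hn.le]; exact he
    exact hq n.toNat (by omega) this
  intro n hn
  by_contra h0
  rcases lt_or_gt_of_ne h0 with hlt | hgt
  · have h1 : q ^ (-n) = 1 := by rw [zpow_neg, hn, inv_one]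
    exact key (-n) (by omega) h1
  · exact key n hgt hn

/-- Lemma 4.5.4 of André: if `1/(z-α) = ((-1/q)δ_{q⁻¹} - ξ)(∑_{n=-M}^{N} γ_n/(z-αqⁿ))`
in `K(z)` (stated pointwise away from the poles), then `αξ(1-q) = q^m` for some
integer `m ≥ 1`. -/
theorem q_difference_partial_fraction_forces_zero {K : Type*} [Field K] [CharZero K]
    (q α ξ : K) (hq0 : q ≠ 0) (hq : ∀ m : ℕ, 1 ≤ m → q ^ m ≠ 1)
    (hα : α ≠ 0) (hξ : ξ ≠ 0) (M N : ℕ) (γ : ℤ → K)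
    (h : ∀ z : K, z ≠ 0 → z ≠ α →
      (∀ n ∈ Finset.Icc (-(M : ℤ)) (N : ℤ), z ≠ α * q ^ n ∧ q⁻¹ * z ≠ α * q ^ n) →
      1 / (z - α) =
        (-1 / q) *
            (((∑ n ∈ Finset.Icc (-(M : ℤ)) (N : ℤ), γ n / (q⁻¹ * z - α * q ^ n)) -
                ∑ n ∈ Finset.Icc (-(M : ℤ)) (N : ℤ), γ n / (z - α * q ^ n)) /
              ((q⁻¹ - 1) * z)) -
          ξ * ∑ n ∈ Finset.Icc (-(M : ℤ)) (N : ℤ), γ n / (z - α * q ^ n)) :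
    ∃ m : ℕ, 1 ≤ m ∧ α * ξ * (1 - q) = q ^ m := by
  classical
  have hq1 : q ≠ 1 := by simpa using hq 1 le_rfl
  have hq1' : q - 1 ≠ 0 := sub_ne_zero.mpr hq1
  have hqz : ∀ n : ℤ, (q : K) ^ n ≠ 0 := fun n => zpow_ne_zero n hq0
  have hβ : ∀ n : ℤ, α * q ^ n ≠ 0 := fun n => mul_ne_zero hα (hqz n)
  set S : Finset ℤ := Finset.Icc (-(M : ℤ)) (N : ℤ) with hS
  set T : Finset ℤ := Finset.Icc (-(M : ℤ)) ((N : ℤ) + 1) with hT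
  set γ' : ℤ → K := fun n => if n ∈ S then γ n else 0 with hγ'
  set d : ℤ → K := fun n => γ' n / ((q - 1) * (α * q ^ n)) with hd
  set p : ℤ → K := fun n => α * q ^ n with hp
  set b : ℤ → K := fun n => d (n - 1) - d n - ξ * γ' n - (if n = 0 then 1 else 0) with hb
  set B : Finset K := insert 0 ((Finset.Icc (-(M : ℤ) - 1) ((N : ℤ) + 1)).image p) with hB
  have hST : S ⊆ T := Finset.Icc_subset_Icc le_rfl (by omega)
  -- Step A : vanishing of the combination of simple fractions
  have h' : ∀ z : K, z ∉ B → ∑ n ∈ T, b n / (z - p n) = 0 := by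
    intro z hzB
    have hz0 : z ≠ 0 := fun e => hzB (by rw [hB, e]; exact Finset.mem_insert_self 0 _)
    have hzp : ∀ n ∈ Finset.Icc (-(M : ℤ) - 1) ((N : ℤ) + 1), z ≠ α * q ^ n := by
      intro n hn he
      exact hzB (by
        rw [hB]
        exact Finset.mem_insert_of_mem (Finset.mem_image.mpr ⟨n, hn, by rw [hp, he]⟩))
    have hzα : z ≠ α := by
      have := hzp 0 (by rw [Finset.mem_Icc]; omega)
      simpa using this
    have hcond : ∀ n ∈ S, z ≠ α * q ^ n ∧ q⁻¹ * z ≠ α * q ^ n := by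
      intro n hn
      rw [hS, Finset.mem_Icc] at hn
      constructor
      · exact hzp n (by rw [Finset.mem_Icc]; omega)
      · intro he
        have hz1 : z = α * q ^ (n + 1) := by
          rw [zpow_add_one₀ hq0]
          calc z = q * (q⁻¹ * z) := by field_simp
          _ = q * (α * q ^ n) := by rw [he]
          _ = α * (q ^ n * q) := by ring
        exact hzp (n + 1) (by rw [Finset.mem_Icc]; omega) hz1
    have heq := h z hz0 hzα hcond
    -- non-vanishing of denominators
    have hden1 : ∀ n ∈ S, z - α * q ^ n ≠ 0 := fun n hn =>
      sub_ne_zero.mpr ((hcond n hn).1)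
    have hden2 : ∀ n ∈ S, q⁻¹ * z - α * q ^ n ≠ 0 := fun n hn =>
      sub_ne_zero.mpr ((hcond n hn).2)
    -- rewrite right-hand side of heq as a sum of termwise expressions
    have hRHS : (-1 / q) *
            (((∑ n ∈ S, γ n / (q⁻¹ * z - α * q ^ n)) -
                ∑ n ∈ S, γ n / (z - α * q ^ n)) /
              ((q⁻¹ - 1) * z)) -
          ξ * ∑ n ∈ S, γ n / (z - α * q ^ n)
        = ∑ n ∈ S, (γ n/((q-1)*(α*q^n))/(z - α*q^(n+1))
            - γ n/((q-1)*(α*q^n))/(z - α*q^n) - ξ*γ n/(z - α*q^n)) := by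
      rw [← Finset.sum_sub_distrib, Finset.sum_div, Finset.mul_sum, Finset.mul_sum,
        ← Finset.sum_sub_distrib]
      exact Finset.sum_congr rfl fun n hn =>
        term_eq q α ξ z (γ n) n hq0 hq1 hz0 (hden1 n hn) (hden2 n hn) (hβ n)
    rw [hRHS] at heq
    -- expand the goal sum
    have hsplit : ∑ n ∈ T, b n / (z - p n)
        = (∑ n ∈ T, d (n - 1) / (z - p n)) - (∑ n ∈ T, d n / (z - p n))
          - (∑ n ∈ T, ξ * γ' n / (z - p n))
          - ∑ n ∈ T, (if n = 0 then (1:K) else 0) / (z - p n) := by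
      rw [← Finset.sum_sub_distrib, ← Finset.sum_sub_distrib, ← Finset.sum_sub_distrib]
      exact Finset.sum_congr rfl fun n _ => by simp only [hb, sub_div]
    have hsum4 : ∑ n ∈ T, (if n = 0 then (1:K) else 0) / (z - p n) = 1 / (z - α) := by
      rw [Finset.sum_eq_single_of_mem 0 (by rw [hT, Finset.mem_Icc]; omega)]
      · simp [hp]
      · intro m _ hm
        simp [hm]
    have hsum2 : ∑ n ∈ T, d n / (z - p n)
        = ∑ n ∈ S, γ n/((q-1)*(α*q^n))/(z - α*q^n) := by
      rw [← Finset.sum_subset hST (fun x _ hxS => by simp [hd, hγ', hxS])]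
      exact Finset.sum_congr rfl fun n hn => by simp [hd, hγ', hn, hp]
    have hsum3 : ∑ n ∈ T, ξ * γ' n / (z - p n)
        = ∑ n ∈ S, ξ * γ n/(z - α*q^n) := by
      rw [← Finset.sum_subset hST (fun x _ hxS => by simp [hγ', hxS])]
      exact Finset.sum_congr rfl fun n hn => by simp [hγ', hn, hp]
    have hsum1 : ∑ n ∈ T, d (n - 1) / (z - p n)
        = ∑ n ∈ S, γ n/((q-1)*(α*q^n))/(z - α*q^(n+1)) := by
      have hre : ∑ n ∈ T, d (n - 1) / (z - p n)
          = ∑ k ∈ Finset.Icc (-(M : ℤ) - 1) ((N : ℤ)), d k / (z - p (k + 1)) := by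
        apply Finset.sum_nbij' (fun n => n - 1) (fun k => k + 1)
        · intro a ha; rw [Finset.mem_Icc]; rw [hT, Finset.mem_Icc] at ha; omega
        · intro a ha; rw [hT, Finset.mem_Icc]; rw [Finset.mem_Icc] at ha; omega
        · intro a _; ring
        · intro a _; ring
        · intro a _; norm_num
      rw [hre, ← Finset.sum_subset
          (Finset.Icc_subset_Icc (by omega) (by omega) : S ⊆ Finset.Icc (-(M : ℤ) - 1) ((N : ℤ)))
          (fun x _ hxS => by rw [← hS] at hxS; simp [hd, hγ', hxS])]
      exact Finset.sum_congr rfl fun n hn => by simp [hd, hγ', hn, hp]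
    rw [hsplit, hsum1, hsum2, hsum3, hsum4]
    rw [Finset.sum_sub_distrib, Finset.sum_sub_distrib] at heq
    linear_combination -heq
  -- Step B : all coefficients vanish
  have hinj : Set.InjOn p ↑T := by
    intro m _ n _ he
    rw [hp] at he
    have h1 : q ^ m = q ^ n := mul_left_cancel₀ hα he
    have h2 : q ^ (m - n) = (1 : K) := by
      rw [zpow_sub₀ hq0, h1, div_self (hqz n)]
    have := zpow_eq_one_imp q hq0 hq (m - n) h2
    omega
  have hbz : ∀ n ∈ T, b n = 0 := key_frac T p b hinj B h'
  -- Step C : scalar recurrences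
  set c : K := α * ξ * (1 - q) with hc
  have eqn : ∀ n ∈ T, q * γ' (n - 1)
      = γ' n * (1 - c * q ^ n) + (if n = 0 then (1:K) else 0) * ((q - 1) * α * q ^ n) := by
    intro n hn
    have e := hbz n hn
    simp only [hb, hd] at e
    have ht : q ^ (n - 1) = q ^ n / q := by
      rw [zpow_sub_one₀ hq0, div_eq_mul_inv]
    rw [ht] at e
    exact scalar_eq q α ξ (γ' (n-1)) (γ' n) (if n = 0 then (1:K) else 0) (q ^ n)
      hq0 hq1' hα (hqz n) e
  -- Step D : the two inductions
  by_contra hcon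
  push_neg at hcon
  -- downward: γ' n = 0 for 0 ≤ n ≤ N
  have down : ∀ k : ℕ, k ≤ N + 1 → γ' ((N : ℤ) + 1 - k) = 0 := by
    intro k
    induction k with
    | zero =>
      intro _
      simp only [hγ', Nat.cast_zero, sub_zero]
      rw [if_neg (by rw [hS, Finset.mem_Icc]; omega)]
    | succ k ih =>
      intro hk
      have h0 := ih (by omega)
      have hnT : ((N : ℤ) + 1 - k) ∈ T := by rw [hT, Finset.mem_Icc]; omega
      have e := eqn _ hnT
      rw [if_neg (by omega : ¬((N : ℤ) + 1 - k = 0)), zero_mul, add_zero, h0, zero_mul] at e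
      have : γ' ((N : ℤ) + 1 - k - 1) = 0 := by
        rcases mul_eq_zero.mp e with h | h
        · exact absurd h hq0
        · exact h
      convert this using 2
      push_cast
      ring
  have hγ0 : γ' 0 = 0 := by
    have := down (N + 1) le_rfl
    convert this using 2
    push_cast
    ring
  -- upward: γ' n = 0 for -M ≤ n ≤ -1
  have up : ∀ k : ℕ, k ≤ M → γ' (-(M : ℤ) - 1 + k) = 0 := by
    intro k
    induction k with
    | zero =>
      intro _
      simp only [hγ', Nat.cast_zero, add_zero]
      rw [if_neg (by rw [hS, Finset.mem_Icc]; omega)]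
    | succ k ih =>
      intro hk
      have h0 := ih (by omega)
      set n : ℤ := -(M : ℤ) - 1 + (k + 1 : ℕ) with hn
      have hnT : n ∈ T := by rw [hT, Finset.mem_Icc, hn]; push_cast; omega
      have e := eqn n hnT
      have hprev : γ' (n - 1) = 0 := by
        convert h0 using 2
        rw [hn]; push_cast; ring
      rw [if_neg (by rw [hn]; push_cast; omega : ¬(n = 0)), zero_mul, add_zero,
        hprev, mul_zero] at e
      have hfac : 1 - c * q ^ n ≠ 0 := by
        intro hcq
        have h1 : c * q ^ n = 1 := by linear_combination -hcq
        have h2 : c = (q ^ n)⁻¹ := eq_inv_of_mul_eq_one_left (by linear_combination h1)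
        have h3 : c = q ^ ((M - k : ℕ) : ℤ) := by
          rw [h2, ← zpow_neg]
          congr 1
          rw [hn]; push_cast; omega
        rw [zpow_natCast] at h3
        exact hcon (M - k) (by omega) h3
      have hzero : γ' n = 0 := by
        rcases mul_eq_zero.mp e.symm with h | h
        · exact h
        · exact absurd h hfac
      exact hzero
  have hγm1 : γ' (-1) = 0 := by
    have := up M le_rfl
    convert this using 2
    push_cast
    ring
  -- the equation at n = 0 gives the contradiction
  have e0 := eqn 0 (by rw [hT, Finset.mem_Icc]; omega)
  rw [if_pos rfl, zero_sub, hγm1, hγ0, mul_zero, zero_mul, zero_add, one_mul] at e0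
  simp only [zpow_zero, mul_one] at e0
  exact (mul_ne_zero hq1' hα) e0.symm
end

section
/- The q-exponential E_q(z) = ∑_{n≥0} z^n/(n_q!) satisfies the infinite product expansion E_q(z) = ∏_{m=1}^∞ (1 + (q-1)z/q^m) for complex q with |q| > 1, and in particular its zeros are exactly z = q^m/(1-q) for integers m > 0. -/
open Filter Finset Complex Topology

noncomputable def qFac (q : ℂ) (n : ℕ) : ℂ :=
  ∏ k ∈ Finset.range n, ((1 - q ^ (k + 1)) / (1 - q))

lemma hq_ne_zero {q : ℂ} (hq : 1 < ‖q‖) : q ≠ 0 := by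
  intro h; rw [h, norm_zero] at hq; linarith

lemma hq_ne_one {q : ℂ} (hq : 1 < ‖q‖) : q ≠ 1 := by
  intro h; simp [h] at hq

lemma qpow_ne_one {q : ℂ} (hq : 1 < ‖q‖) (k : ℕ) : q ^ (k + 1) ≠ 1 := by
  intro h
  have h2 : ‖q ^ (k+1)‖ = 1 := by rw [h, norm_one]
  rw [norm_pow] at h2
  have : 1 < ‖q‖ ^ (k+1) := one_lt_pow₀ hq (Nat.succ_ne_zero k)
  linarith

lemma qFac_ne_zero {q : ℂ} (hq : 1 < ‖q‖) (n : ℕ) : qFac q n ≠ 0 := by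
  unfold qFac
  rw [Finset.prod_ne_zero_iff]
  intro k _
  exact div_ne_zero (sub_ne_zero.2 fun h => qpow_ne_one hq k h.symm)
    (sub_ne_zero.2 fun h => hq_ne_one hq h.symm)

lemma qFac_succ (q : ℂ) (n : ℕ) :
    qFac q (n + 1) = qFac q n * ((1 - q ^ (n + 1)) / (1 - q)) := by
  unfold qFac; rw [Finset.prod_range_succ]

lemma summable_norm_qExp {q : ℂ} (hq : 1 < ‖q‖) (z : ℂ) :
    Summable (fun n : ℕ => ‖z ^ n / qFac q n‖) := by
  apply summable_of_ratio_norm_eventually_le (r := 1/2) (by norm_num)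
  have habs : Tendsto (fun n : ℕ => ‖q‖ ^ n) atTop atTop :=
    tendsto_pow_atTop_atTop_of_one_lt hq
  obtain ⟨N, hN⟩ := (habs.eventually_ge_atTop (2 * ‖z‖ * ‖1 - q‖ + 1)).exists_forall_of_atTop
  rw [eventually_atTop]
  refine ⟨N, fun n hn => ?_⟩
  have hfrac : z ^ (n+1) / qFac q (n+1) = (z * (1 - q) / (1 - q ^ (n+1))) * (z ^ n / qFac q n) := by
    rw [qFac_succ]
    have h1 : (1 - q ^ (n+1)) ≠ 0 := sub_ne_zero.2 fun h => qpow_ne_one hq n h.symm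
    have h2 : (1 - q) ≠ 0 := sub_ne_zero.2 fun h => hq_ne_one hq h.symm
    have h3 := qFac_ne_zero hq n
    field_simp
    ring
  rw [norm_norm, norm_norm, hfrac, norm_mul]
  have hd : ‖(1:ℂ) - q ^ (n+1)‖ ≥ 2 * ‖z‖ * ‖1 - q‖ + 1 - 1 := by
    have := hN (n+1) (le_trans hn (Nat.le_succ n))
    have h4 : ‖q ^ (n+1)‖ - ‖(1:ℂ)‖ ≤ ‖q ^ (n+1) - 1‖ :=
      norm_sub_norm_le _ _
    rw [norm_one, norm_pow] at h4
    calc 2 * ‖z‖ * ‖1 - q‖ + 1 - 1 ≤ ‖q‖ ^ (n+1) - 1 := by linarith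
    _ ≤ ‖q ^ (n+1) - 1‖ := h4
    _ = ‖(1:ℂ) - q ^ (n+1)‖ := by rw [norm_sub_rev]
  have hdpos : (0:ℝ) < ‖(1:ℂ) - q ^ (n+1)‖ :=
    norm_pos_iff.2 (sub_ne_zero.2 fun h => qpow_ne_one hq n h.symm)
  have hfirst : ‖z * (1 - q) / (1 - q ^ (n+1))‖ ≤ 1/2 := by
    rw [norm_div, norm_mul, div_le_iff₀ hdpos]
    nlinarith [norm_nonneg z, norm_nonneg ((1:ℂ) - q)]
  calc ‖z * (1 - q) / (1 - q ^ (n+1))‖ * ‖z ^ n / qFac q n‖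
      ≤ 1/2 * ‖z ^ n / qFac q n‖ := by
        apply mul_le_mul_of_nonneg_right hfirst (norm_nonneg _)

lemma summable_qExp {q : ℂ} (hq : 1 < ‖q‖) (z : ℂ) :
    Summable (fun n : ℕ => z ^ n / qFac q n) :=
  (summable_norm_qExp hq z).of_norm

lemma qExp_funct_eq {q : ℂ} (hq : 1 < ‖q‖) (z : ℂ) :
    (∑' n : ℕ, (q * z) ^ n / qFac q n) = (1 + (q - 1) * z) * ∑' n : ℕ, z ^ n / qFac q n := by
  have h1 := summable_qExp hq z
  have h2 := summable_qExp hq (q * z)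
  have hg : Summable (fun n : ℕ => (q*z) ^ n / qFac q n - z ^ n / qFac q n) := h2.sub h1
  have key : ∑' n : ℕ, ((q*z) ^ n / qFac q n - z ^ n / qFac q n)
      = (q - 1) * z * ∑' n : ℕ, z ^ n / qFac q n := by
    rw [Summable.tsum_eq_zero_add hg]
    have h0 : (q*z) ^ 0 / qFac q 0 - z ^ 0 / qFac q 0 = 0 := by simp
    rw [h0, zero_add]
    have hterm : ∀ n : ℕ, (q*z) ^ (n+1) / qFac q (n+1) - z ^ (n+1) / qFac q (n+1)
        = (q - 1) * z * (z ^ n / qFac q n) := by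
      intro n
      rw [qFac_succ]
      have ha : (1 - q ^ (n+1)) ≠ 0 := sub_ne_zero.2 fun h => qpow_ne_one hq n h.symm
      have hb : (1 - q) ≠ 0 := sub_ne_zero.2 fun h => hq_ne_one hq h.symm
      have hc := qFac_ne_zero hq n
      field_simp
      ring
    rw [tsum_congr hterm, tsum_mul_left]
  have := Summable.tsum_sub h2 h1
  rw [key] at this
  have := eq_add_of_sub_eq' this.symm
  rw [this]
  ring

lemma qExp_iter {q : ℂ} (hq : 1 < ‖q‖) (z : ℂ) (M : ℕ) :
    (∑' n : ℕ, z ^ n / qFac q n)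
      = (∏ m ∈ Finset.range M, (1 + (q - 1) * z / q ^ (m + 1)))
        * ∑' n : ℕ, (z / q ^ M) ^ n / qFac q n := by
  induction M with
  | zero => simp
  | succ M ih =>
    rw [ih, Finset.prod_range_succ]
    have hq0 := hq_ne_zero hq
    have hqz : q * (z / q ^ (M+1)) = z / q ^ M := by
      field_simp
      ring
    have heq := qExp_funct_eq hq (z / q ^ (M+1))
    rw [hqz] at heq
    rw [heq]
    have : (q - 1) * (z / q ^ (M+1)) = (q - 1) * z / q ^ (M+1) := by ring
    rw [this]
    ring

lemma qExp_near_one {q : ℂ} (hq : 1 < ‖q‖) {w : ℂ} (hw : ‖w‖ ≤ 1) :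
    ‖(∑' n : ℕ, w ^ n / qFac q n) - 1‖ ≤ ‖w‖ * ∑' n : ℕ, ‖(1:ℂ) ^ (n+1) / qFac q (n+1)‖ := by
  have hs := summable_qExp hq w
  have hns := summable_norm_qExp hq w
  rw [Summable.tsum_eq_zero_add hs]
  have h0 : w ^ 0 / qFac q 0 = 1 := by simp [qFac]
  rw [h0, add_sub_cancel_left]
  have hns' : Summable (fun n : ℕ => ‖w ^ (n+1) / qFac q (n+1)‖) := by
    exact_mod_cast (summable_nat_add_iff 1).2 hns
  refine le_trans (norm_tsum_le_tsum_norm hns') ?_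
  have hC : Summable (fun n : ℕ => ‖w‖ * ‖(1:ℂ) ^ (n+1) / qFac q (n+1)‖) := by
    exact (((summable_nat_add_iff 1).2 (summable_norm_qExp hq 1))).mul_left _
  rw [← tsum_mul_left]
  refine Summable.tsum_le_tsum (fun n => ?_) hns' hC
  rw [norm_div, norm_div, norm_pow, norm_pow, norm_one, one_pow]
  rw [mul_one_div]
  have hnum : ‖w‖ ^ (n+1) ≤ ‖w‖ := by
    calc ‖w‖ ^ (n+1) ≤ ‖w‖ ^ 1 := pow_le_pow_of_le_one (norm_nonneg w) hw (Nat.succ_le_succ (Nat.zero_le n))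
    _ = ‖w‖ := pow_one _
  gcongr

lemma qExp_tendsto_one {q : ℂ} (hq : 1 < ‖q‖) (z : ℂ) :
    Tendsto (fun M : ℕ => ∑' n : ℕ, (z / q ^ M) ^ n / qFac q n) atTop (𝓝 1) := by
  rw [tendsto_iff_norm_sub_tendsto_zero]
  set C := ∑' n : ℕ, ‖(1:ℂ) ^ (n+1) / qFac q (n+1)‖ with hCdef
  have hzq : Tendsto (fun M : ℕ => ‖z / q ^ M‖) atTop (𝓝 0) := by
    have h1 : Tendsto (fun M : ℕ => ‖z‖ * (‖q‖)⁻¹ ^ M) atTop (𝓝 (‖z‖ * 0)) :=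
      tendsto_const_nhds.mul (tendsto_pow_atTop_nhds_zero_of_lt_one
        (by positivity) (by rw [inv_lt_one_iff₀]; right; exact hq))
    rw [mul_zero] at h1
    refine h1.congr fun M => ?_
    simp [norm_div, norm_pow, inv_pow, div_eq_mul_inv]
  have hev : ∀ᶠ M : ℕ in atTop, ‖(∑' n : ℕ, (z / q ^ M) ^ n / qFac q n) - 1‖ ≤ ‖z / q ^ M‖ * C := by
    have h1 : ∀ᶠ M : ℕ in atTop, ‖z / q ^ M‖ ≤ 1 :=
      hzq.eventually (eventually_le_nhds (by norm_num : (0:ℝ) < 1))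
    filter_upwards [h1] with M hM
    exact qExp_near_one hq hM
  have hbound : Tendsto (fun M : ℕ => ‖z / q ^ M‖ * C) atTop (𝓝 0) := by
    simpa using hzq.mul_const C
  exact squeeze_zero' (Eventually.of_forall fun M => norm_nonneg _) hev hbound

lemma summable_norm_w {q : ℂ} (hq : 1 < ‖q‖) (z : ℂ) :
    Summable (fun m : ℕ => ‖(q - 1) * z / q ^ (m + 1)‖) := by
  have h : Summable (fun m : ℕ => (‖(q-1) * z‖ * (‖q‖)⁻¹) * (‖q‖)⁻¹ ^ m) :=
    (summable_geometric_of_lt_one (by positivity)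
      (by rw [inv_lt_one_iff₀]; right; exact hq)).mul_left _
  refine h.congr fun m => ?_
  rw [norm_div, norm_pow, div_eq_mul_inv, pow_succ,
    mul_inv, inv_pow]
  ring

lemma summable_log_w {q : ℂ} (hq : 1 < ‖q‖) (z : ℂ) :
    Summable (fun m : ℕ => Complex.log (1 + (q - 1) * z / q ^ (m + 1))) := by
  have hw := summable_norm_w hq z
  apply Summable.of_norm_bounded_eventually_nat (g := fun m => 2 * ‖(q - 1) * z / q ^ (m + 1)‖)
    (hw.mul_left 2)
  have : Tendsto (fun m : ℕ => ‖(q - 1) * z / q ^ (m + 1)‖) atTop (𝓝 0) := hw.tendsto_atTop_zero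
  filter_upwards [this.eventually (eventually_le_nhds (by norm_num : (0:ℝ) < 1/2))] with m hm
  set w := (q - 1) * z / q ^ (m + 1)
  have hlt : ‖w‖ < 1 := lt_of_le_of_lt hm (by norm_num)
  have hbd := Complex.norm_log_one_add_sub_self_le hlt
  have h2 : (1 - ‖w‖)⁻¹ ≤ 2 := by
    rw [inv_le_comm₀ (by linarith) (by norm_num)]
    linarith
  calc ‖Complex.log (1 + w)‖ ≤ ‖Complex.log (1 + w) - w‖ + ‖w‖ := by
        simpa using norm_add_le (Complex.log (1 + w) - w) w
  _ ≤ ‖w‖ ^ 2 * (1 - ‖w‖)⁻¹ / 2 + ‖w‖ := by linarith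
  _ ≤ 2 * ‖w‖ := by nlinarith [norm_nonneg w, sq_nonneg ‖w‖]

lemma factor_zero_iff {q : ℂ} (hq : 1 < ‖q‖) (z : ℂ) (m : ℕ) :
    1 + (q - 1) * z / q ^ (m + 1) = 0 ↔ z = q ^ (m + 1) / (1 - q) := by
  have hq0 : q ≠ 0 := hq_ne_zero hq
  have hq1 : (1:ℂ) - q ≠ 0 := sub_ne_zero.2 fun h => hq_ne_one hq h.symm
  have hqp : q ^ (m+1) ≠ 0 := pow_ne_zero _ hq0
  constructor
  · intro h
    field_simp at h ⊢
    linear_combination -h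
  · intro h
    rw [h]
    field_simp
    ring

/-- For `|q| > 1`, the `q`-exponential `E_q(z) = ∑ zⁿ/n_q!` equals the infinite
product `∏_{m≥1} (1 + (q-1)z/q^m)`, and its zeros are exactly `z = q^m/(1-q)`,
`m ≥ 1`. -/
theorem q_exponential_product_expansion (q : ℂ) (hq : 1 < ‖q‖) (z : ℂ) :
    (∑' n : ℕ, z ^ n / ∏ k ∈ Finset.range n, ((1 - q ^ (k + 1)) / (1 - q)))
        = ∏' m : ℕ, (1 + (q - 1) * z / q ^ (m + 1)) ∧
      ((∑' n : ℕ, z ^ n / ∏ k ∈ Finset.range n, ((1 - q ^ (k + 1)) / (1 - q))) = 0 ↔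
        ∃ m : ℕ, z = q ^ (m + 1) / (1 - q)) := by
  have hF : (∑' n : ℕ, z ^ n / ∏ k ∈ Finset.range n, ((1 - q ^ (k + 1)) / (1 - q)))
      = ∑' n : ℕ, z ^ n / qFac q n := rfl
  set f : ℕ → ℂ := fun m => 1 + (q - 1) * z / q ^ (m + 1) with hfdef
  have hIterT : Tendsto (fun M : ℕ => (∏ m ∈ Finset.range M, f m)
      * (∑' n : ℕ, (z / q ^ M) ^ n / qFac q n)) atTop (𝓝 (∑' n : ℕ, z ^ n / qFac q n)) := by
    have heq : (fun M : ℕ => (∏ m ∈ Finset.range M, f m)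
        * (∑' n : ℕ, (z / q ^ M) ^ n / qFac q n))
        = fun _ => ∑' n : ℕ, z ^ n / qFac q n := funext fun M => (qExp_iter hq z M).symm
    rw [heq]; exact tendsto_const_nhds
  have hG := qExp_tendsto_one hq z
  have hprodT : Tendsto (fun M : ℕ => ∏ m ∈ Finset.range M, f m) atTop
      (𝓝 (∑' n : ℕ, z ^ n / qFac q n)) := by
    have hne : ∀ᶠ M : ℕ in atTop, (∑' n : ℕ, (z / q ^ M) ^ n / qFac q n) ≠ 0 :=
      hG.eventually_ne one_ne_zero
    have h2 := hIterT.div hG one_ne_zero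
    rw [div_one] at h2
    refine h2.congr' ?_
    filter_upwards [hne] with M hM
    show (∏ m ∈ Finset.range M, f m) * (∑' n : ℕ, (z / q ^ M) ^ n / qFac q n)
        / (∑' n : ℕ, (z / q ^ M) ^ n / qFac q n) = _
    rw [mul_div_assoc, div_self hM, mul_one]
  by_cases hzero : ∃ m, f m = 0
  · obtain ⟨m0, hm0⟩ := hzero
    have hHP : HasProd f 0 := by
      rw [HasProd]
      refine tendsto_const_nhds.congr' ?_
      filter_upwards [eventually_ge_atTop ({m0} : Finset ℕ)] with s hs
      exact (Finset.prod_eq_zero (hs (Finset.mem_singleton_self m0)) hm0).symm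
    have htp : (∏' m : ℕ, f m) = 0 := hHP.tprod_eq
    have hFz : (∑' n : ℕ, z ^ n / qFac q n) = 0 := by
      have h0 : Tendsto (fun M : ℕ => ∏ m ∈ Finset.range M, f m) atTop (𝓝 0) := by
        refine tendsto_const_nhds.congr' ?_
        filter_upwards [eventually_ge_atTop (m0 + 1)] with M hM
        exact (Finset.prod_eq_zero (Finset.mem_range.2 (by omega)) hm0).symm
      exact tendsto_nhds_unique hprodT h0
    refine ⟨by rw [hF, hFz, htp], ?_⟩
    rw [hF, hFz]
    exact ⟨fun _ => ⟨m0, (factor_zero_iff hq z m0).1 hm0⟩, fun _ => rfl⟩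
  · push_neg at hzero
    have hlog := summable_log_w hq z
    have hMul : Multipliable f :=
      Complex.multipliable_of_summable_log (f := f) hlog
    have htp : (∏' m : ℕ, f m) ≠ 0 := by
      have h := Complex.cexp_tsum_eq_tprod (f := f) hzero hlog
      rw [← h]
      exact Complex.exp_ne_zero _
    have hFz : (∑' n : ℕ, z ^ n / qFac q n) = ∏' m : ℕ, f m :=
      tendsto_nhds_unique hprodT hMul.hasProd.tendsto_prod_nat
    refine ⟨by rw [hF, hFz], ?_⟩
    rw [hF, hFz]
    constructor
    · intro h; exact absurd h htp
    · rintro ⟨m, rfl⟩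
      exact absurd ((factor_zero_iff hq _ m).2 rfl) (hzero m)
end
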